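/- In a category of fibrant objects where every trivial fibration admits a section, the relation 'f ≈ g iff there is a weak equivalence t with f∘t ≃ g∘t' coincides with the homotopy relation: f ≈ g if and only if f ≃ g. -/

import Mathlib

open CategoryTheory Limits

universe u v

/-- A category of fibrant objects in the sense of K. Brown: distinguished classes of
fibrations and weak equivalences, satisfying Brown's axioms (2-out-of-3, closure under
composition, every object fibrant, base change of (trivial) fibrations, existence of
path space objects and of factorizations). -/
structure BrownCFO (C : Type u) [Category.{v} C] [HasTerminal C] [HasBinaryProducts C] where
  /-- the class of fibrations -/
  Fib : ∀ {X Y : C}, (X ⟶ Y) → Prop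
  /-- the class of weak equivalences -/
  Weq : ∀ {X Y : C}, (X ⟶ Y) → Prop
  weq_id : ∀ X : C, Weq (𝟙 X)
  weq_of_comp_left : ∀ {X Y Z : C} (f : X ⟶ Y) (g : Y ⟶ Z), Weq f → Weq (f ≫ g) → Weq g
  weq_of_comp_right : ∀ {X Y Z : C} (f : X ⟶ Y) (g : Y ⟶ Z), Weq g → Weq (f ≫ g) → Weq f
  weq_comp : ∀ {X Y Z : C} (f : X ⟶ Y) (g : Y ⟶ Z), Weq f → Weq g → Weq (f ≫ g)
  fib_id : ∀ X : C, Fib (𝟙 X)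
  fib_comp : ∀ {X Y Z : C} (f : X ⟶ Y) (g : Y ⟶ Z), Fib f → Fib g → Fib (f ≫ g)
  /-- every object is fibrant -/
  fib_terminal : ∀ X : C, Fib (terminal.from X)
  /-- pullbacks along fibrations exist -/
  hasPullback_of_fib : ∀ {X Y Z : C} (f : X ⟶ Z) (g : Y ⟶ Z), Fib g → HasPullback f g
  /-- fibrations are stable under base change -/
  fib_stable : ∀ {X Y Z : C} (f : X ⟶ Z) (g : Y ⟶ Z), Fib g →
    ∀ [HasPullback f g], Fib (pullback.fst f g)
  /-- trivial fibrations are stable under base change -/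
  trivFib_stable : ∀ {X Y Z : C} (f : X ⟶ Z) (g : Y ⟶ Z), Fib g → Weq g →
    ∀ [HasPullback f g], Weq (pullback.fst f g)
  /-- existence of path space objects -/
  pathObj : ∀ Y : C, ∃ (P : C) (ι : Y ⟶ P) (e : P ⟶ Y ⨯ Y),
    Weq ι ∧ Fib e ∧ ι ≫ e = prod.lift (𝟙 Y) (𝟙 Y)
  /-- every morphism factors as a weak equivalence followed by a fibration -/
  factor : ∀ {X Y : C} (f : X ⟶ Y), ∃ (Z : C) (w : X ⟶ Z) (p : Z ⟶ Y),
    Weq w ∧ Fib p ∧ w ≫ p = f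

/-- Two morphisms `f g : X ⟶ Y` are homotopic if there is a path space object `P` for `Y`
and a morphism `h : X ⟶ P` whose compositions with the two evaluation maps are `f`
and `g`. -/
def BrownCFO.Homotopic {C : Type u} [Category.{v} C] [HasTerminal C] [HasBinaryProducts C]
    (S : BrownCFO C) {X Y : C} (f g : X ⟶ Y) : Prop :=
  ∃ (P : C) (ι : Y ⟶ P) (e : P ⟶ Y ⨯ Y),
    S.Weq ι ∧ S.Fib e ∧ ι ≫ e = prod.lift (𝟙 Y) (𝟙 Y) ∧
    ∃ h : X ⟶ P, h ≫ e ≫ prod.fst = f ∧ h ≫ e ≫ prod.snd = g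

/-- In a category of fibrant objects in which every trivial fibration admits a section,
the relation `f ≈ g` ("`f∘t ≃ g∘t` after precomposing with some weak equivalence `t`")
coincides with the homotopy relation `f ≃ g`. -/
theorem stmt_10 {C : Type u} [Category.{v} C] [HasTerminal C] [HasBinaryProducts C]
    (S : BrownCFO C)
    (hsec : ∀ {X Y : C} (t : X ⟶ Y), S.Fib t → S.Weq t → ∃ s : Y ⟶ X, s ≫ t = 𝟙 Y)
    {X Y : C} (f g : X ⟶ Y) :
    (∃ (X' : C) (t : X' ⟶ X), S.Weq t ∧ S.Homotopic (t ≫ f) (t ≫ g)) ↔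
      S.Homotopic f g := by
  constructor
  · rintro ⟨X', t, ht, P, ι, e, hι, he, hιe, h, hf, hg⟩
    have _hPB : HasPullback (prod.lift f g) e := S.hasPullback_of_fib _ _ he
    have hcomm : t ≫ prod.lift f g = h ≫ e := by
      apply Limits.prod.hom_ext
      · simp [hf]; exact prod.lift_fst _ _
      · simp [hg]; exact prod.lift_snd _ _
    obtain ⟨Z, w, p, hw, hp, hwp⟩ := S.factor (pullback.lift t h hcomm)
    have hq : S.Fib (pullback.fst (prod.lift f g) e) := S.fib_stable _ _ he
    have hpq_fib : S.Fib (p ≫ pullback.fst (prod.lift f g) e) := S.fib_comp _ _ hp hq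
    have hwt : w ≫ (p ≫ pullback.fst (prod.lift f g) e) = t := by
      rw [← Category.assoc, hwp, pullback.lift_fst]
    have hpq_weq : S.Weq (p ≫ pullback.fst (prod.lift f g) e) := by
      apply S.weq_of_comp_left w _ hw
      rw [hwt]; exact ht
    obtain ⟨s, hs⟩ := hsec _ hpq_fib hpq_weq
    have key : ((s ≫ p) ≫ pullback.snd (prod.lift f g) e) ≫ e = prod.lift f g := by
      rw [Category.assoc, ← pullback.condition, ← Category.assoc, Category.assoc s p]
      rw [hs, Category.id_comp]
    refine ⟨P, ι, e, hι, he, hιe, (s ≫ p) ≫ pullback.snd (prod.lift f g) e, ?_, ?_⟩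
    · rw [← Category.assoc, key]; exact prod.lift_fst f g
    · rw [← Category.assoc, key]; exact prod.lift_snd f g
  · rintro ⟨P, ι, e, hι, he, hιe, h, hf, hg⟩
    exact ⟨X, 𝟙 X, S.weq_id X, P, ι, e, hι, he, hιe, h, by simpa using hf, by simpa using hg⟩
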